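/- Let V be a finite-dimensional real vector space with a norm |·| and let m be a positive integer. Then there exists a positive constant C (depending only on V and m) such that for all x, y ∈ V, ∫₀¹ |x + t y|^m dt ≥ C |y|^m. -/

import Mathlib

/-- For a finite-dimensional real normed vector space `V` and a positive integer `m`,
there is a constant `C > 0` such that `∫₀¹ ‖x + t • y‖^m dt ≥ C ‖y‖^m` for all `x y : V`. -/
theorem stmt0 (V : Type*) [NormedAddCommGroup V] [NormedSpace ℝ V]
    [FiniteDimensional ℝ V] (m : ℕ) (hm : 1 ≤ m) :
    ∃ C > 0, ∀ x y : V, C * ‖y‖ ^ m ≤ ∫ t in (0:ℝ)..1, ‖x + t • y‖ ^ m := by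
  refine ⟨(1/4)^(m+1), by positivity, fun x y => ?_⟩
  have hcont : Continuous fun t : ℝ => ‖x + t • y‖ ^ m :=
    (continuous_const.add (continuous_id.smul continuous_const)).norm.pow m
  have hint : ∀ a b : ℝ, IntervalIntegrable (fun t : ℝ => ‖x + t • y‖ ^ m) MeasureTheory.volume a b :=
    fun a b => hcont.intervalIntegrable a b
  have hnn : ∀ t : ℝ, 0 ≤ ‖x + t • y‖ ^ m := fun t => by positivity
  rcases eq_or_ne y 0 with hy | hy
  · have : (0:ℝ) ≤ ∫ t in (0:ℝ)..1, ‖x + t • y‖ ^ m :=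
      intervalIntegral.integral_nonneg (by norm_num) (fun t _ => hnn t)
    simpa [hy, zero_pow (by omega : m ≠ 0)] using this
  have hy' : 0 < ‖y‖ := norm_pos_iff.mpr hy
  have hconst : ((1:ℝ)/4)^(m+1) * ‖y‖ ^ m = (1 - 3/4) * (‖y‖/4)^m := by
    simp only [div_eq_mul_inv, one_mul, mul_pow, pow_succ]; ring
  rcases le_or_gt ‖x‖ (‖y‖/2) with ha | ha
  · -- use interval [3/4, 1]
    have key : ∀ t ∈ Set.Icc (3/4 : ℝ) 1, (‖y‖/4)^m ≤ ‖x + t • y‖ ^ m := by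
      intro t ht
      apply pow_le_pow_left₀ (by positivity)
      have h1 : ‖t • y‖ - ‖x‖ ≤ ‖x + t • y‖ := by
        have := norm_sub_norm_le (t • y) (-x)
        simpa [sub_neg_eq_add, add_comm] using this
      have h2 : ‖t • y‖ = t * ‖y‖ := by
        rw [norm_smul, Real.norm_eq_abs, abs_of_nonneg (by linarith [ht.1])]
      rw [h2] at h1
      nlinarith [ht.1, ht.2, hy'.le]
    have h2 : ∫ t in (3/4:ℝ)..1, (‖y‖/4)^m ≤ ∫ t in (3/4:ℝ)..1, ‖x + t • y‖ ^ m :=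
      intervalIntegral.integral_mono_on (by norm_num) (intervalIntegrable_const) (hint _ _) key
    have h3 : ∫ t in (3/4:ℝ)..1, ‖x + t • y‖ ^ m ≤ ∫ t in (0:ℝ)..1, ‖x + t • y‖ ^ m :=
      intervalIntegral.integral_mono_interval (by norm_num) (by norm_num) (le_refl 1)
        (Filter.Eventually.of_forall (fun t => hnn t)) (hint _ _)
    calc ((1:ℝ)/4)^(m+1) * ‖y‖ ^ m = (1 - 3/4) * (‖y‖/4)^m := hconst
      _ = ∫ t in (3/4:ℝ)..1, (‖y‖/4)^m := by rw [intervalIntegral.integral_const, smul_eq_mul]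
      _ ≤ _ := le_trans h2 h3
  · -- use interval [0, 1/4]
    have key : ∀ t ∈ Set.Icc (0 : ℝ) (1/4), (‖y‖/4)^m ≤ ‖x + t • y‖ ^ m := by
      intro t ht
      apply pow_le_pow_left₀ (by positivity)
      have h1 : ‖x‖ - ‖t • y‖ ≤ ‖x + t • y‖ := by
        have := norm_sub_norm_le x (-(t • y))
        simpa [sub_neg_eq_add] using this
      have h2 : ‖t • y‖ = t * ‖y‖ := by
        rw [norm_smul, Real.norm_eq_abs, abs_of_nonneg ht.1]
      rw [h2] at h1
      nlinarith [ht.1, ht.2, hy'.le]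
    have h2 : ∫ t in (0:ℝ)..(1/4), (‖y‖/4)^m ≤ ∫ t in (0:ℝ)..(1/4), ‖x + t • y‖ ^ m :=
      intervalIntegral.integral_mono_on (by norm_num) (intervalIntegrable_const) (hint _ _) key
    have h3 : ∫ t in (0:ℝ)..(1/4), ‖x + t • y‖ ^ m ≤ ∫ t in (0:ℝ)..1, ‖x + t • y‖ ^ m :=
      intervalIntegral.integral_mono_interval (le_refl 0) (by norm_num) (by norm_num)
        (Filter.Eventually.of_forall (fun t => hnn t)) (hint _ _)
    calc ((1:ℝ)/4)^(m+1) * ‖y‖ ^ m = (1 - 3/4) * (‖y‖/4)^m := hconst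
      _ = ∫ t in (0:ℝ)..(1/4), (‖y‖/4)^m := by
          rw [intervalIntegral.integral_const, smul_eq_mul]; norm_num
      _ ≤ _ := le_trans h2 h3
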